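/- arXiv:2009.10789 — 2 statements merged into one kernel-verified Lean document; each statement's English description precedes it below -/
import Mathlib

section
/- Let $0 < \delta < 1/100$ and define sequences $\alpha_0 = \beta_0 = 1$, $\alpha_{j+1} = \alpha_j \frac{1 - 5\sqrt{\delta/\alpha_j}}{2}$, $\beta_{j+1} = \beta_j \frac{1 + 5\sqrt{\delta/\alpha_j}}{2}$ (defined as long as $\alpha_j > 0$). Then there exist an absolute constant $C > 0$ (independent of $\delta$) and a natural number $L$ such that $\alpha_j \ge 100\delta$ for all $j \le L$, $25\delta \le \alpha_{L+1} < 100\delta$, and $\beta_{L+1} < C\,\alpha_{L+1}$. -/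
theorem NOU_iteration_lemma :
    ∃ C : ℝ, 0 < C ∧
      ∀ δ : ℝ, 0 < δ → δ < 1 / 100 →
        ∀ α β : ℕ → ℝ, α 0 = 1 → β 0 = 1 →
          (∀ j, α (j + 1) = α j * (1 - 5 * Real.sqrt (δ / α j)) / 2) →
          (∀ j, β (j + 1) = β j * (1 + 5 * Real.sqrt (δ / α j)) / 2) →
          ∃ L : ℕ, (∀ j ≤ L, 100 * δ ≤ α j) ∧
            25 * δ ≤ α (L + 1) ∧ α (L + 1) < 100 * δ ∧
            β (L + 1) < C * α (L + 1) := by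
  refine ⟨Real.exp 7 + 1, by positivity, ?_⟩
  intro δ hδ0 hδ1 α β hα0 hβ0 hα hβ
  set t : ℕ → ℝ := fun j => Real.sqrt (δ / α j) with ht
  have htnn : ∀ j, 0 ≤ t j := fun j => Real.sqrt_nonneg _
  -- halving upper bound
  have halve : ∀ j, 0 ≤ α j → α (j + 1) ≤ α j / 2 := by
    intro j hj
    rw [hα j]
    have := htnn j
    nlinarith
  -- the sqrt term is small while α j ≥ 100 δ
  have tsmall : ∀ j, 100 * δ ≤ α j → t j ≤ 1 / 10 := by
    intro j hj
    have hαpos : 0 < α j := lt_of_lt_of_le (by linarith) hj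
    have h1 : δ / α j ≤ 1 / 100 := by
      rw [div_le_div_iff₀ hαpos (by norm_num)]; linarith
    calc t j ≤ Real.sqrt (1 / 100) := Real.sqrt_le_sqrt h1
      _ = 1 / 10 := by
          rw [show (1:ℝ)/100 = (1/10)^2 by norm_num, Real.sqrt_sq (by norm_num)]
  -- quartering lower bound while α j ≥ 100 δ
  have quarter : ∀ j, 100 * δ ≤ α j → α j / 4 ≤ α (j + 1) := by
    intro j hj
    have h1 := tsmall j hj
    have hαpos : (0:ℝ) < α j := lt_of_lt_of_le (by linarith) hj
    rw [hα j]
    nlinarith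
  -- existence of an index where α drops below 100 δ
  have hex : ∃ n, α n < 100 * δ := by
    by_contra h
    push_neg at h
    have hpos : ∀ n, 0 ≤ α n := fun n => le_trans (by positivity) (h n)
    have hdecay : ∀ n, α n ≤ (1 / 2) ^ n := by
      intro n
      induction n with
      | zero => simp [hα0]
      | succ n ih =>
        calc α (n + 1) ≤ α n / 2 := halve n (hpos n)
          _ ≤ (1 / 2) ^ n / 2 := by linarith
          _ = (1 / 2) ^ (n + 1) := by ring
    obtain ⟨n, hn⟩ := exists_pow_lt_of_lt_one
      (show (0:ℝ) < 100 * δ by positivity) (by norm_num : (1:ℝ) / 2 < 1)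
    have := h n
    have := hdecay n
    linarith
  classical
  set N := Nat.find hex with hN
  have hNspec : α N < 100 * δ := Nat.find_spec hex
  have hNmin : ∀ m < N, 100 * δ ≤ α m := by
    intro m hm
    have := Nat.find_min hex hm
    linarith [not_lt.mp this]
  have hN0 : N ≠ 0 := by
    intro h0
    rw [h0, hα0] at hNspec
    linarith
  obtain ⟨L, hNL⟩ : ∃ L, N = L + 1 := ⟨N - 1, (Nat.succ_pred_eq_of_ne_zero hN0).symm⟩
  rw [hNL] at hNspec hNmin
  have hbig : ∀ j ≤ L, 100 * δ ≤ α j := fun j hj => hNmin j (Nat.lt_succ_of_le hj)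
  have hge25 : 25 * δ ≤ α (L + 1) := by
    have := quarter L (hbig L le_rfl)
    have := hbig L le_rfl
    linarith
  refine ⟨L, hbig, hge25, hNspec, ?_⟩
  -- geometric growth backwards: α (L - k) ≥ 2^k * 100 δ
  have hgeo : ∀ k ≤ L, 2 ^ k * (100 * δ) ≤ α (L - k) := by
    intro k hk
    induction k with
    | zero => simpa using hbig L le_rfl
    | succ k ih =>
      have hk' : k ≤ L := Nat.le_of_succ_le hk
      have ihk := ih hk'
      have hidx : L - k = (L - (k + 1)) + 1 := by omega
      have hnn : 0 ≤ α (L - (k + 1)) :=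
        le_trans (by positivity) (hbig _ (Nat.sub_le _ _))
      have hhalf := halve (L - (k + 1)) hnn
      rw [← hidx] at hhalf
      calc 2 ^ (k + 1) * (100 * δ) = 2 * (2 ^ k * (100 * δ)) := by ring
        _ ≤ 2 * α (L - k) := by linarith
        _ ≤ α (L - (k + 1)) := by linarith
  -- hence for i ≤ L : α i ≥ 2^(L-i) * 100 δ, and t i ≤ (1/10) * s^(L-i)
  set s : ℝ := Real.sqrt (1 / 2) with hs
  have hs0 : 0 ≤ s := Real.sqrt_nonneg _
  have hs2 : s ^ 2 = 1 / 2 := Real.sq_sqrt (by norm_num)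
  have hs71 : s ≤ 71 / 100 := by
    nlinarith [Real.sq_sqrt (show (0:ℝ) ≤ 1/2 by norm_num), Real.sqrt_nonneg (1/2 : ℝ)]
  have tbd : ∀ i ≤ L, t i ≤ (1 / 10) * s ^ (L - i) := by
    intro i hi
    have hα_i : 2 ^ (L - i) * (100 * δ) ≤ α i := by
      have := hgeo (L - i) (Nat.sub_le _ _)
      rwa [show L - (L - i) = i by omega] at this
    have hαpos : (0:ℝ) < α i := lt_of_lt_of_le (by positivity) hα_i
    have h2 : δ / α i ≤ ((1 / 10) * s ^ (L - i)) ^ 2 := by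
      have hrhs : ((1 / 10) * s ^ (L - i)) ^ 2 = (1 / 100) * (1 / 2) ^ (L - i) := by
        rw [mul_pow, ← pow_mul, mul_comm (L - i) 2, pow_mul, hs2]; ring
      rw [hrhs, div_le_iff₀ hαpos]
      have h2pos : (0:ℝ) < (2:ℝ) ^ (L - i) := by positivity
      calc δ = (1 / 100) * (1 / 2) ^ (L - i) * (2 ^ (L - i) * (100 * δ)) := by
              rw [show (1 / 100 : ℝ) * (1 / 2) ^ (L - i) * (2 ^ (L - i) * (100 * δ)) =
                ((1 / 2 : ℝ) ^ (L - i) * 2 ^ (L - i)) * δ by ring, ← mul_pow]; norm_num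
        _ ≤ (1 / 100) * (1 / 2) ^ (L - i) * α i := by
              apply mul_le_mul_of_nonneg_left hα_i; positivity
    calc t i ≤ Real.sqrt (((1 / 10) * s ^ (L - i)) ^ 2) := Real.sqrt_le_sqrt h2
      _ = (1 / 10) * s ^ (L - i) := Real.sqrt_sq (by positivity)
  -- bound on the exponent sum
  have hEsum : ∑ i ∈ Finset.range (L + 1), 20 * t i ≤ 7 := by
    have h1 : ∑ i ∈ Finset.range (L + 1), 20 * t i ≤
        ∑ i ∈ Finset.range (L + 1), 2 * s ^ (L - i) := by
      apply Finset.sum_le_sum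
      intro i hi
      have hi' : i ≤ L := Nat.lt_succ_iff.mp (Finset.mem_range.mp hi)
      have := tbd i hi'
      linarith
    have h2 : ∑ i ∈ Finset.range (L + 1), 2 * s ^ (L - i) =
        2 * ∑ k ∈ Finset.range (L + 1), s ^ k := by
      rw [Finset.mul_sum]
      exact Finset.sum_nbij' (fun i => L - i) (fun k => L - k)
        (by intro a ha; simp only [Finset.mem_range] at *; omega)
        (by intro a ha; simp only [Finset.mem_range] at *; omega)
        (by intro a ha; simp only [Finset.mem_range] at *; omega)
        (by intro a ha; simp only [Finset.mem_range] at *; omega)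
        (by intro a ha; rfl)
    have h3 : ∑ k ∈ Finset.range (L + 1), s ^ k ≤ 1 / (1 - s) := by
      have hs1 : s < 1 := by linarith
      calc ∑ k ∈ Finset.range (L + 1), s ^ k = (1 - s ^ (L + 1)) / (1 - s) := by
            rw [geom_sum_eq (by linarith)]
            rw [div_eq_div_iff (by linarith) (by linarith)]
            ring
        _ ≤ 1 / (1 - s) := by
            have hsp : (0:ℝ) ≤ s ^ (L + 1) := by positivity
            rw [div_le_div_iff₀ (by linarith) (by linarith)]
            nlinarith
    have h4 : 1 / (1 - s) ≤ 1 / (29 / 100) := by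
      apply one_div_le_one_div_of_le (by norm_num) (by linarith)
    linarith
  -- main induction: β j ≤ exp(sum) * α j
  have main : ∀ j ≤ L + 1,
      β j ≤ Real.exp (∑ i ∈ Finset.range j, 20 * t i) * α j := by
    intro j hj
    induction j with
    | zero => simp [hβ0, hα0]
    | succ j ih =>
      have hj' : j ≤ L := Nat.lt_succ_iff.mp hj
      have ihj := ih (le_trans hj' (Nat.le_succ L))
      have hbj : 100 * δ ≤ α j := hbig j hj'
      have hαnn : (0:ℝ) ≤ α j := le_trans (by positivity) hbj
      have htj : t j ≤ 1 / 10 := tsmall j hbj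
      have htj0 := htnn j
      have hexp : 20 * t j + 1 ≤ Real.exp (20 * t j) := Real.add_one_le_exp _
      have h1mt : (0:ℝ) ≤ 1 - 5 * t j := by linarith
      have hfac : (0:ℝ) ≤ α j * (1 - 5 * t j) := mul_nonneg hαnn h1mt
      have key : α j * (1 + 5 * t j) ≤ Real.exp (20 * t j) * (α j * (1 - 5 * t j)) := by
        have h2 := mul_le_mul_of_nonneg_right hexp hfac
        nlinarith [mul_nonneg (mul_nonneg hαnn htj0) (show (0:ℝ) ≤ 1 - 10 * t j by linarith)]
      rw [hβ j, hα j, Finset.sum_range_succ, Real.exp_add]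
      have step1 : β j * (1 + 5 * t j) / 2 ≤
          Real.exp (∑ i ∈ Finset.range j, 20 * t i) * α j * (1 + 5 * t j) / 2 := by
        have : (0:ℝ) ≤ (1 + 5 * t j) / 2 := by linarith
        have := mul_le_mul_of_nonneg_right ihj this
        calc β j * (1 + 5 * t j) / 2 = β j * ((1 + 5 * t j) / 2) := by ring
          _ ≤ Real.exp (∑ i ∈ Finset.range j, 20 * t i) * α j * ((1 + 5 * t j) / 2) := this
          _ = Real.exp (∑ i ∈ Finset.range j, 20 * t i) * α j * (1 + 5 * t j) / 2 := by ring
      have step2 : Real.exp (∑ i ∈ Finset.range j, 20 * t i) * α j * (1 + 5 * t j) / 2 ≤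
          Real.exp (∑ i ∈ Finset.range j, 20 * t i) * Real.exp (20 * t j) *
            (α j * (1 - 5 * t j) / 2) := by
        have hE : (0:ℝ) ≤ Real.exp (∑ i ∈ Finset.range j, 20 * t i) :=
          le_of_lt (Real.exp_pos _)
        have := mul_le_mul_of_nonneg_left key hE
        nlinarith
      linarith
  have hfin := main (L + 1) le_rfl
  have hmono : Real.exp (∑ i ∈ Finset.range (L + 1), 20 * t i) ≤ Real.exp 7 :=
    Real.exp_le_exp.mpr hEsum
  have hαnn : (0:ℝ) < α (L + 1) := lt_of_lt_of_le (by positivity) hge25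
  calc β (L + 1) ≤ Real.exp (∑ i ∈ Finset.range (L + 1), 20 * t i) * α (L + 1) := hfin
    _ ≤ Real.exp 7 * α (L + 1) := mul_le_mul_of_nonneg_right hmono (le_of_lt hαnn)
    _ < (Real.exp 7 + 1) * α (L + 1) := by nlinarith
end

section
/- Let $u_1,\dots,u_N$ be an orthonormal system in $L_2(\Omega,\mu)$ with $\|u_i\|_{L_4(\Omega,\mu)} < \infty$ for all $i$, where $\mu$ is a probability measure. Then for any $\delta > 0$ there exists a finite set $\Omega_M = \{x^1,\dots,x^M\} \subset \Omega$ such that for every $f \in \mathrm{span}(u_1,\dots,u_N)$, $\big| \|f\|_{L_2(\Omega,\mu)}^2 - \frac{1}{M}\sum_{j=1}^M |f(x^j)|^2 \big| \le \delta\, \|f\|_{L_2(\Omega,\mu)}^2$. -/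
open MeasureTheory
open scoped BigOperators

private lemma list_sum_flatMap {α M : Type*} [AddCommMonoid M] (l : List α) (f : α → List M) :
    (l.flatMap f).sum = (l.map (fun a => (f a).sum)).sum := by
  induction l with
  | nil => simp
  | cons a l ih => simp [List.flatMap_cons, ih]

private lemma phi_sum {K : Type*} [Fintype K] (w : K → ℂ) {J : Type*} (s : Finset J)
    (g : J → K → ℂ) :
    (∑ p, w p * (∑ j ∈ s, g j) p).re = ∑ j ∈ s, (∑ p, w p * g j p).re := by
  simp only [Finset.sum_apply, Finset.mul_sum, Complex.re_sum]
  rw [Finset.sum_comm]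

private lemma phi_smul {K : Type*} [Fintype K] (w : K → ℂ) (r : ℝ) (v : K → ℂ) :
    (∑ p, w p * (r • v) p).re = r * (∑ p, w p * v p).re := by
  simp only [Pi.smul_apply]
  simp_rw [mul_smul_comm]
  rw [← Finset.smul_sum, Complex.smul_re, smul_eq_mul]

private lemma phi_bound {K : Type*} [Fintype K] (w : K → ℂ) (v : K → ℂ) :
    |(∑ p, w p * v p).re| ≤ ∑ p, ‖w p‖ * ‖v p‖ := by
  calc |(∑ p, w p * v p).re| ≤ ‖∑ p, w p * v p‖ := Complex.abs_re_le_norm _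
    _ = ‖∑ p, w p * v p‖ := rfl
    _ ≤ ∑ p, ‖w p * v p‖ := norm_sum_le _ _
    _ = ∑ p, ‖w p‖ * ‖v p‖ := by simp [norm_mul]

private lemma conj_mul_re (z : ℂ) : ((starRingEnd ℂ) z * z).re = ‖z‖ ^ 2 := by
  rw [RCLike.conj_mul]
  norm_cast

set_option maxHeartbeats 1000000 in
private lemma equal_weight_approx {Ω : Type*} {E : Type*} [NormedAddCommGroup E]
    [NormedSpace ℝ E] (G : Ω → E) {v : E} (hv : v ∈ closure (convexHull ℝ (Set.range G)))
    {ε : ℝ} (hε : 0 < ε) :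
    ∃ (M : ℕ) (_ : 0 < M) (x : Fin M → Ω),
      ‖(M : ℝ)⁻¹ • (∑ j, G (x j)) - v‖ ≤ ε := by
  classical
  obtain ⟨w, hwmem, hwv⟩ := Metric.mem_closure_iff.1 hv (ε / 2) (by positivity)
  rw [convexHull_eq] at hwmem
  obtain ⟨ι, t, a, z, ha0, ha1, hzr, hcm⟩ := hwmem
  rw [Finset.centerMass_eq_of_sum_1 _ _ ha1] at hcm
  have htne : t.Nonempty := Finset.nonempty_of_sum_ne_zero (by rw [ha1]; exact one_ne_zero)
  obtain ⟨i0, hi0⟩ := htne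
  haveI : Nonempty Ω := by obtain ⟨p, -⟩ := hzr i0 hi0; exact ⟨p⟩
  have hy : ∀ i, ∃ p : Ω, i ∈ t → G p = z i := by
    intro i
    by_cases hi : i ∈ t
    · obtain ⟨p, hp⟩ := hzr i hi; exact ⟨p, fun _ => hp⟩
    · exact ⟨Classical.arbitrary Ω, fun h => absurd h hi⟩
  choose y hy using hy
  set n : ℕ := t.card with hn
  have hn1 : (1 : ℝ) ≤ n := by
    have : 0 < n := Finset.card_pos.2 ⟨i0, hi0⟩
    exact_mod_cast this
  set C : ℝ := 1 + ∑ i ∈ t, ‖z i‖ with hC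
  have hCpos : 0 < C := by positivity
  have hsumnorm : ∑ i ∈ t, ‖z i‖ ≤ C := by rw [hC]; linarith
  obtain ⟨M, hM⟩ := exists_nat_gt (2 * n * C / ε)
  have hMpos : 0 < M := by
    have h0 : (0 : ℝ) ≤ 2 * n * C / ε := by positivity
    exact_mod_cast h0.trans_lt hM
  have hMR : (0 : ℝ) < M := by exact_mod_cast hMpos
  set m : ι → ℕ := fun i =>
    if i = i0 then M - ∑ j ∈ t.erase i0, ⌊a j * M⌋₊ else ⌊a i * M⌋₊ with hm
  have hmS : ∀ j ∈ t.erase i0, m j = ⌊a j * M⌋₊ := by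
    intro j hj
    simp [hm, Finset.ne_of_mem_erase hj]
  have hfl : ∀ i ∈ t.erase i0, (⌊a i * M⌋₊ : ℝ) ≤ a i * M := fun i hi =>
    Nat.floor_le (mul_nonneg (ha0 i (Finset.mem_of_mem_erase hi)) hMR.le)
  have hsumfl : (∑ j ∈ t.erase i0, ⌊a j * M⌋₊) ≤ M := by
    have h1 : ((∑ j ∈ t.erase i0, ⌊a j * M⌋₊ : ℕ) : ℝ) ≤ ∑ j ∈ t.erase i0, a j * M := by
      push_cast
      exact Finset.sum_le_sum hfl
    have h2 : ∑ j ∈ t.erase i0, a j * M ≤ M := by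
      rw [← Finset.sum_mul]
      have h3 : ∑ j ∈ t.erase i0, a j ≤ 1 := by
        rw [← ha1]
        exact Finset.sum_le_sum_of_subset_of_nonneg (Finset.erase_subset _ _)
          (fun i hi _ => ha0 i hi)
      nlinarith
    exact_mod_cast h1.trans h2
  have hmero : ∑ j ∈ t.erase i0, m j = ∑ j ∈ t.erase i0, ⌊a j * M⌋₊ :=
    Finset.sum_congr rfl hmS
  have hmsum : ∑ i ∈ t, m i = M := by
    rw [← Finset.add_sum_erase _ _ hi0, hmero]
    have hmi0 : m i0 = M - ∑ j ∈ t.erase i0, ⌊a j * M⌋₊ := by simp [hm]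
    rw [hmi0]
    omega
  have herase : ∀ i ∈ t.erase i0, |(m i : ℝ) / M - a i| ≤ 1 / M := by
    intro i hi
    have h1 : (⌊a i * M⌋₊ : ℝ) ≤ a i * M := hfl i hi
    have h2 : a i * M < ⌊a i * M⌋₊ + 1 := Nat.lt_floor_add_one _
    have hmi : (m i : ℝ) = (⌊a i * M⌋₊ : ℝ) := by rw [hmS i hi]
    have heq : (m i : ℝ) / M - a i = ((⌊a i * M⌋₊ : ℝ) - a i * M) / M := by
      rw [hmi]; field_simp
    rw [heq, abs_div, abs_of_pos hMR]
    gcongr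
    · rw [abs_le]
      constructor <;> linarith
  have hrbound : ∀ i ∈ t, |(m i : ℝ) / M - a i| ≤ n / M := by
    intro i hi
    by_cases hii : i = i0
    · subst hii
      have hmi0 : (m i : ℝ) = (M : ℝ) - ∑ j ∈ t.erase i, (m j : ℝ) := by
        have h0 : m i = M - ∑ j ∈ t.erase i, m j := by
          rw [hmero]; simp [hm]
        rw [h0, Nat.cast_sub (by rw [hmero]; exact hsumfl)]
        push_cast
        ring
      have hasum : ∑ j ∈ t.erase i, a j = 1 - a i := by
        have h := Finset.add_sum_erase t a hi
        rw [ha1] at h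
        linarith
      have key : (m i : ℝ) / M - a i = ∑ j ∈ t.erase i, (a j - (m j : ℝ) / M) := by
        rw [Finset.sum_sub_distrib, hasum, ← Finset.sum_div, hmi0]
        field_simp
        ring
      calc |(m i : ℝ) / M - a i| = |∑ j ∈ t.erase i, (a j - (m j : ℝ) / M)| := by rw [key]
        _ ≤ ∑ j ∈ t.erase i, |a j - (m j : ℝ) / M| := Finset.abs_sum_le_sum_abs _ _
        _ ≤ ∑ _j ∈ t.erase i, 1 / (M:ℝ) :=
            Finset.sum_le_sum (fun j hj => by rw [abs_sub_comm]; exact herase j hj)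
        _ = ((t.erase i).card : ℝ) * (1 / (M:ℝ)) := by rw [Finset.sum_const, nsmul_eq_mul]
        _ ≤ n / M := by
            have hcard : ((t.erase i).card : ℝ) ≤ n := by
              exact_mod_cast Finset.card_le_card (Finset.erase_subset _ _)
            rw [mul_one_div]
            gcongr
    · calc |(m i : ℝ) / M - a i| ≤ 1 / M := herase i (Finset.mem_erase.2 ⟨hii, hi⟩)
        _ ≤ n / M := by gcongr
  set L : List Ω := t.toList.flatMap (fun i => List.replicate (m i) (y i)) with hL
  have hlen : L.length = M := by
    rw [hL, List.length_flatMap]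
    have h1 : (List.map (fun a => (List.replicate (m a) (y a)).length) t.toList)
        = List.map m t.toList := by
      simp [Function.comp]
    rw [h1, Finset.sum_map_toList, hmsum]
  refine ⟨M, hMpos, fun j => L.get (Fin.cast hlen.symm j), ?_⟩
  have hsum : ∑ j : Fin M, G (L.get (Fin.cast hlen.symm j)) = ∑ i ∈ t, m i • z i := by
    have e1 : ∑ j : Fin M, G (L.get (Fin.cast hlen.symm j))
        = ∑ j : Fin L.length, G (L.get j) :=
      Fintype.sum_equiv (finCongr hlen.symm) _ _ (fun j => rfl)
    have e2 : ∑ j : Fin L.length, G (L.get j) = (L.map G).sum := by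
      rw [← List.sum_ofFn]
      congr 1
      conv_rhs => rw [← List.ofFn_get L, List.map_ofFn]
      rfl
    have e3 : (L.map G).sum = ∑ i ∈ t, m i • z i := by
      rw [hL, List.map_flatMap, list_sum_flatMap]
      have h1 : (List.map (fun i => (List.map G (List.replicate (m i) (y i))).sum) t.toList)
          = List.map (fun i => m i • G (y i)) t.toList := by
        simp [List.map_replicate, List.sum_replicate]
      rw [h1, Finset.sum_map_toList]
      exact Finset.sum_congr rfl (fun i hi => by rw [hy i hi])
    rw [e1, e2, e3]
  rw [hsum]
  have hA : (M : ℝ)⁻¹ • ∑ i ∈ t, m i • z i = ∑ i ∈ t, ((m i : ℝ) / M) • z i := by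
    rw [Finset.smul_sum]
    refine Finset.sum_congr rfl (fun i hi => ?_)
    rw [← Nat.cast_smul_eq_nsmul ℝ, smul_smul, inv_mul_eq_div]
  rw [hA]
  have hAw : ‖(∑ i ∈ t, ((m i : ℝ) / M) • z i) - w‖ ≤ ε / 2 := by
    rw [← hcm, ← Finset.sum_sub_distrib]
    calc ‖∑ i ∈ t, (((m i : ℝ) / M) • z i - a i • z i)‖
        ≤ ∑ i ∈ t, ‖((m i : ℝ) / M) • z i - a i • z i‖ := norm_sum_le _ _
      _ ≤ ∑ i ∈ t, (n / M) * ‖z i‖ := by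
          refine Finset.sum_le_sum (fun i hi => ?_)
          rw [← sub_smul, norm_smul, Real.norm_eq_abs]
          exact mul_le_mul_of_nonneg_right (hrbound i hi) (norm_nonneg _)
      _ = (n / M) * ∑ i ∈ t, ‖z i‖ := by rw [Finset.mul_sum]
      _ ≤ (n / M) * C := by
          have : (0:ℝ) ≤ n / M := by positivity
          exact mul_le_mul_of_nonneg_left hsumnorm this
      _ ≤ ε / 2 := by
          rw [div_mul_eq_mul_div, div_le_iff₀ hMR]
          have h2 : 2 * n * C < M * ε := by
            have := (div_lt_iff₀ hε).1 hM
            linarith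
          nlinarith
  have hv' : ‖w - v‖ ≤ ε / 2 := by
    rw [← dist_eq_norm, dist_comm]
    exact hwv.le
  calc ‖(∑ i ∈ t, ((m i : ℝ) / M) • z i) - v‖
      = ‖((∑ i ∈ t, ((m i : ℝ) / M) • z i) - w) + (w - v)‖ := by rw [sub_add_sub_cancel]
    _ ≤ ‖(∑ i ∈ t, ((m i : ℝ) / M) • z i) - w‖ + ‖w - v‖ := norm_add_le _ _
    _ ≤ ε / 2 + ε / 2 := add_le_add hAw hv'
    _ = ε := by ring

set_option maxHeartbeats 1000000 in
theorem pre_discretization (N : ℕ)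
    {Ω : Type*} [MeasurableSpace Ω] (μ : Measure Ω) [IsProbabilityMeasure μ]
    (u : Fin N → Ω → ℂ)
    (horth : ∀ i k, ∫ x, (starRingEnd ℂ) (u i x) * u k x ∂μ =
      if i = k then 1 else 0)
    (hL4 : ∀ i, MemLp (u i) 4 μ) :
    ∀ δ : ℝ, 0 < δ →
      ∃ (M : ℕ) (_ : 0 < M) (x : Fin M → Ω),
        ∀ f ∈ Submodule.span ℂ (Set.range u),
          |(∫ y, ‖f y‖ ^ 2 ∂μ) - (1 / (M : ℝ)) * ∑ j, ‖f (x j)‖ ^ 2| ≤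
            δ * ∫ y, ‖f y‖ ^ 2 ∂μ := by
  intro δ hδ
  classical
  have hu2 : ∀ i, MemLp (u i) 2 μ := fun i =>
    (hL4 i).mono_exponent (by norm_num)
  have hconj : ∀ i, MemLp (fun ω => (starRingEnd ℂ) (u i ω)) 2 μ := by
    intro i
    have h := ContinuousLinearMap.comp_memLp'
      ((RCLike.conjCLE (K := ℂ)) : ℂ →L[ℝ] ℂ) (hu2 i)
    exact h.ae_eq (Filter.Eventually.of_forall fun ω => by
      simp [Function.comp, RCLike.conjCLE_apply])
  have hint : ∀ i k, Integrable (fun ω => (starRingEnd ℂ) (u i ω) * u k ω) μ := by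
    intro i k
    have hexp : (1 : ENNReal) / 1 = 1 / 2 + 1 / 2 := by
      simp [one_div, ENNReal.inv_two_add_inv_two]
    have h := MemLp.smul (r := 1) (hu2 k) (hconj i)
      (hpqr := ⟨by rw [ENNReal.inv_two_add_inv_two, inv_one]⟩)
    rw [memLp_one_iff_integrable] at h
    exact h.congr (Filter.Eventually.of_forall fun ω => rfl)
  set G : Ω → (Fin N × Fin N → ℂ) := fun ω p => (starRingEnd ℂ) (u p.1 ω) * u p.2 ω with hG
  have hGint : Integrable G μ := by
    set L : Fin N × Fin N → (ℂ →L[ℂ] (Fin N × Fin N → ℂ)) := fun p =>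
      ContinuousLinearMap.pi (fun q => if q = p then ContinuousLinearMap.id ℂ ℂ else 0)
      with hLdef
    have hLapp : ∀ (p q : Fin N × Fin N) (z : ℂ), L p z q = if q = p then z else 0 := by
      intro p q z
      by_cases h : q = p <;>
        simp [hLdef, ContinuousLinearMap.pi_apply, h]
    have hGeq : G = fun ω => ∑ p : Fin N × Fin N,
        L p ((starRingEnd ℂ) (u p.1 ω) * u p.2 ω) := by
      funext ω q
      rw [Finset.sum_apply]
      simp only [hLapp]
      rw [Finset.sum_ite_eq Finset.univ q
        (fun p => (starRingEnd ℂ) (u p.1 ω) * u p.2 ω)]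
      simp [hG]
    rw [hGeq]
    exact integrable_finset_sum _ (fun p _ => (L p).integrable_comp (hint p.1 p.2))
  set B : Fin N × Fin N → ℂ := fun p => if p.1 = p.2 then 1 else 0 with hB
  have hGB : ∫ ω, G ω ∂μ = B := by
    funext p
    have h := (ContinuousLinearMap.proj (R := ℂ)
      (φ := fun _ : Fin N × Fin N => ℂ) p).integral_comp_comm hGint
    calc (∫ ω, G ω ∂μ) p = ∫ ω, G ω p ∂μ := h.symm
      _ = B p := horth p.1 p.2
  haveI : NeZero μ := ⟨IsProbabilityMeasure.ne_zero μ⟩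
  have hmem : (∫ ω, G ω ∂μ) ∈ closure (convexHull ℝ (Set.range G)) := by
    have h := Convex.average_mem (convex_convexHull ℝ (Set.range G)).closure
      isClosed_closure
      (Filter.Eventually.of_forall fun ω => subset_closure (subset_convexHull ℝ _ ⟨ω, rfl⟩))
      hGint
    rwa [average_eq_integral] at h
  have hε : 0 < δ / (N + 1) := by positivity
  obtain ⟨M, hMpos, x, hx⟩ := equal_weight_approx G hmem hε
  rw [hGB] at hx
  refine ⟨M, hMpos, x, ?_⟩
  intro f hf
  obtain ⟨c, rfl⟩ := (Submodule.mem_span_range_iff_exists_fun ℂ).1 hf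
  set w : Fin N × Fin N → ℂ := fun p => (starRingEnd ℂ) (c p.1) * c p.2 with hw
  set A : Fin N × Fin N → ℂ := (M : ℝ)⁻¹ • ∑ j, G (x j) with hA
  have hpoint : ∀ ωy : Ω, ‖(∑ i, c i • u i) ωy‖ ^ 2 = (∑ p, w p * G ωy p).re := by
    intro ωy
    rw [← conj_mul_re]
    congr 1
    have h1 : (∑ i, c i • u i) ωy = ∑ i, c i * u i ωy := by
      simp [Finset.sum_apply]
    rw [h1, map_sum, Finset.sum_mul_sum, Fintype.sum_prod_type]
    refine Finset.sum_congr rfl fun i _ => Finset.sum_congr rfl fun k _ => ?_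
    simp only [hw, hG, map_mul]
    ring
  have e2 : ∀ p : Fin N × Fin N, Integrable (fun ωy => w p * G ωy p) μ :=
    fun p => (hint p.1 p.2).const_mul _
  have hIcalc : ∫ ωy, ‖(∑ i, c i • u i) ωy‖ ^ 2 ∂μ = (∑ p, w p * B p).re := by
    have e1 : ∫ ωy, ‖(∑ i, c i • u i) ωy‖ ^ 2 ∂μ = ∫ ωy, (∑ p, w p * G ωy p).re ∂μ :=
      integral_congr_ae (Filter.Eventually.of_forall fun ωy => hpoint ωy)
    rw [e1]
    rw [show (fun ωy => (∑ p, w p * G ωy p).re) = fun ωy => ∑ p, (w p * G ωy p).re by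
      funext ωy; rw [Complex.re_sum]]
    have e4 : ∀ p : Fin N × Fin N, Integrable (fun ωy => (w p * G ωy p).re) μ :=
      fun p => (e2 p).re
    rw [integral_finset_sum _ (fun p _ => e4 p), Complex.re_sum]
    refine Finset.sum_congr rfl fun p _ => ?_
    have e3 : ∫ ωy, (w p * G ωy p).re ∂μ = (∫ ωy, w p * G ωy p ∂μ).re :=
      Complex.reCLM.integral_comp_comm (e2 p)
    rw [e3, integral_const_mul, horth p.1 p.2]
  have hBre : (∑ p, w p * B p).re = ∑ i, ‖c i‖ ^ 2 := by
    have h1 : (∑ p : Fin N × Fin N, w p * B p) = ∑ i, (starRingEnd ℂ) (c i) * c i := by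
      rw [Fintype.sum_prod_type]
      simp [hw, hB, mul_ite, mul_one, mul_zero, Finset.sum_ite_eq]
    rw [h1, Complex.re_sum]
    exact Finset.sum_congr rfl fun i _ => conj_mul_re (c i)
  have hD : (1 / (M : ℝ)) * ∑ j, ‖(∑ i, c i • u i) (x j)‖ ^ 2 = (∑ p, w p * A p).re := by
    rw [hA, phi_smul w ((M : ℝ)⁻¹) _, phi_sum w Finset.univ (fun j => G (x j)), one_div]
    congr 1
    exact Finset.sum_congr rfl fun j _ => hpoint (x j)
  have hdiff : |(∑ p, w p * B p).re - (∑ p, w p * A p).re| ≤ (δ / (N + 1)) * ∑ p, ‖w p‖ := by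
    have h1 : (∑ p, w p * B p).re - (∑ p, w p * A p).re = (∑ p, w p * (B - A) p).re := by
      simp only [Pi.sub_apply, mul_sub, Finset.sum_sub_distrib, Complex.sub_re]
    rw [h1]
    calc |(∑ p, w p * (B - A) p).re| ≤ ∑ p, ‖w p‖ * ‖(B - A) p‖ := phi_bound w _
      _ ≤ ∑ p, ‖w p‖ * (δ / (N + 1)) := by
          refine Finset.sum_le_sum fun p _ => ?_
          refine mul_le_mul_of_nonneg_left ?_ (norm_nonneg _)
          calc ‖(B - A) p‖ ≤ ‖B - A‖ := norm_le_pi_norm _ p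
            _ = ‖A - B‖ := by rw [norm_sub_rev]
            _ ≤ δ / (N + 1) := hx
      _ = (δ / (N + 1)) * ∑ p, ‖w p‖ := by rw [← Finset.sum_mul]; ring
  have hwsum : ∑ p : Fin N × Fin N, ‖w p‖ = (∑ i, ‖c i‖) ^ 2 := by
    rw [Fintype.sum_prod_type]
    simp only [hw, norm_mul, RCLike.norm_conj]
    rw [sq, Finset.sum_mul_sum]
  have hcs : (∑ i, ‖c i‖) ^ 2 ≤ (N : ℝ) * ∑ i, ‖c i‖ ^ 2 := by
    have h := sq_sum_le_card_mul_sum_sq (s := Finset.univ) (f := fun i : Fin N => ‖c i‖)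
    simpa using h
  have hS : (0 : ℝ) ≤ ∑ i, ‖c i‖ ^ 2 :=
    Finset.sum_nonneg fun i _ => by positivity
  rw [hIcalc, hD]
  calc |(∑ p, w p * B p).re - (∑ p, w p * A p).re|
      ≤ (δ / (N + 1)) * ∑ p, ‖w p‖ := hdiff
    _ = (δ / (N + 1)) * (∑ i, ‖c i‖) ^ 2 := by rw [hwsum]
    _ ≤ (δ / (N + 1)) * ((N : ℝ) * ∑ i, ‖c i‖ ^ 2) := by
        have : (0 : ℝ) ≤ δ / (N + 1) := le_of_lt hε
        exact mul_le_mul_of_nonneg_left hcs this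
    _ ≤ δ * ∑ i, ‖c i‖ ^ 2 := by
        have hfrac : (δ / (N + 1)) * (N : ℝ) ≤ δ := by
          rw [div_mul_eq_mul_div, div_le_iff₀ (by positivity)]
          nlinarith [hδ.le, Nat.cast_nonneg (α := ℝ) N]
        calc (δ / (N + 1)) * ((N : ℝ) * ∑ i, ‖c i‖ ^ 2)
            = ((δ / (N + 1)) * (N : ℝ)) * ∑ i, ‖c i‖ ^ 2 := by ring
          _ ≤ δ * ∑ i, ‖c i‖ ^ 2 := mul_le_mul_of_nonneg_right hfrac hS
    _ = δ * (∑ p, w p * B p).re := by rw [hBre]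
end
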